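/- Let f₁,…,f_N ∈ L²(ℝ^d) ∩ L^∞(ℝ^d) with ‖f_i‖_∞ < 1/2 for all i. Then the N×N matrix A with entries a_{ij} = -∫_{ℝ^d} log(1 - conj(f_i(x)) f_j(x)) dx is positive semidefinite. -/

import Mathlib

open MeasureTheory
open scoped ENNReal NNReal ComplexOrder

private lemma norm_w_lt {a b : ℂ} (ha : ‖a‖ < 2⁻¹) (hb : ‖b‖ < 2⁻¹) :
    ‖(starRingEnd ℂ) a * b‖ < 4⁻¹ := by
  rw [norm_mul, RCLike.norm_conj]
  nlinarith [norm_nonneg a, norm_nonneg b]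

private lemma re_pos_aux {a b : ℂ} (ha : ‖a‖ < 2⁻¹) (hb : ‖b‖ < 2⁻¹) :
    0 < (1 - (starRingEnd ℂ) a * b).re := by
  have h := norm_w_lt ha hb
  have h2 := Complex.abs_re_le_norm ((starRingEnd ℂ) a * b)
  simp only [Complex.sub_re, Complex.one_re]
  have := abs_le.mp (le_of_lt (lt_of_le_of_lt h2 h))
  linarith [this.2]

private lemma arg_ne_pi_aux {a b : ℂ} (ha : ‖a‖ < 2⁻¹) (hb : ‖b‖ < 2⁻¹) :
    (1 - (starRingEnd ℂ) a * b).arg ≠ Real.pi := by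
  intro hcon
  rw [Complex.arg_eq_pi_iff] at hcon
  linarith [re_pos_aux ha hb, hcon.1]

private lemma integral_nonneg_cplx {α : Type*} [MeasurableSpace α] {μ : Measure α} {g : α → ℂ}
    (hg : Integrable g μ) (h : ∀ᵐ t ∂μ, 0 ≤ g t) : 0 ≤ ∫ t, g t ∂μ := by
  rw [Complex.nonneg_iff]
  have hre := integral_re hg (𝕜 := ℂ)
  have him := integral_im hg (𝕜 := ℂ)
  simp only [RCLike.re_eq_complex_re, RCLike.im_eq_complex_im] at hre him
  constructor
  · rw [← hre]
    apply integral_nonneg_of_ae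
    filter_upwards [h] with t ht
    exact (Complex.nonneg_iff.mp ht).1
  · rw [← him]
    have : ∫ t, (g t).im ∂μ = ∫ _t, (0 : ℝ) ∂μ := by
      apply integral_congr_ae
      filter_upwards [h] with t ht
      exact ((Complex.nonneg_iff.mp ht).2).symm
    rw [this, integral_zero]

private lemma key_pointwise {N : ℕ} (z l : Fin N → ℂ) (hz : ∀ i, ‖z i‖ < 2⁻¹) :
    0 ≤ ∑ i, ∑ j, (starRingEnd ℂ) (l i) * l j *
      -(Complex.log (1 - (starRingEnd ℂ) (z i) * z j)) := by
  have hw : ∀ i j, ‖(starRingEnd ℂ) (z i) * z j‖ < 1 :=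
    fun i j => lt_trans (norm_w_lt (hz i) (hz j)) (by norm_num)
  have h1 : ∀ i j, HasSum
      (fun n : ℕ => (starRingEnd ℂ) (l i) * l j * (((starRingEnd ℂ) (z i) * z j) ^ n / n))
      ((starRingEnd ℂ) (l i) * l j * -(Complex.log (1 - (starRingEnd ℂ) (z i) * z j))) :=
    fun i j => (Complex.hasSum_taylorSeries_neg_log (hw i j)).mul_left _
  have h2 : HasSum
      (fun n : ℕ => ∑ i, ∑ j,
        (starRingEnd ℂ) (l i) * l j * (((starRingEnd ℂ) (z i) * z j) ^ n / n))
      (∑ i, ∑ j, (starRingEnd ℂ) (l i) * l j *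
        -(Complex.log (1 - (starRingEnd ℂ) (z i) * z j))) :=
    hasSum_sum fun i _ => hasSum_sum fun j _ => h1 i j
  set s : ℕ → ℂ := fun n => ∑ i, l i * z i ^ n with hs
  have h3 : ∀ n : ℕ, (∑ i, ∑ j,
      (starRingEnd ℂ) (l i) * l j * (((starRingEnd ℂ) (z i) * z j) ^ n / n))
      = ((Complex.normSq (s n) / n : ℝ) : ℂ) := by
    intro n
    have e1 : ∀ i j, (starRingEnd ℂ) (l i) * l j * (((starRingEnd ℂ) (z i) * z j) ^ n / n)
        = (starRingEnd ℂ) (l i * z i ^ n) * (l j * z j ^ n) / n := by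
      intro i j
      simp only [mul_pow, map_mul, map_pow]
      ring
    simp_rw [e1, ← Finset.sum_div, ← Finset.mul_sum, ← Finset.sum_mul, ← map_sum]
    rw [show (∑ x : Fin N, l x * z x ^ n) = s n from rfl, ← Complex.normSq_eq_conj_mul_self]
    push_cast
    ring
  rw [funext h3] at h2
  have hsummable : Summable fun n : ℕ => Complex.normSq (s n) / n :=
    Complex.summable_ofReal.mp h2.summable
  have h4 : HasSum (fun n : ℕ => ((Complex.normSq (s n) / n : ℝ) : ℂ))
      (((∑' n : ℕ, Complex.normSq (s n) / n : ℝ)) : ℂ) :=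
    Complex.hasSum_ofReal.mpr hsummable.hasSum
  rw [h2.unique h4]
  rw [Complex.zero_le_real]
  exact tsum_nonneg fun n => div_nonneg (Complex.normSq_nonneg _) (Nat.cast_nonneg n)

/-- The matrix `a_{ij} = -∫ log(1 - conj(f_i) f_j)` is positive semidefinite for
`f_i ∈ L² ∩ L^∞` with `‖f_i‖_∞ < 1/2`. -/
theorem stmt6 {d N : ℕ} (f : Fin N → (Fin d → ℝ) → ℂ)
    (hf2 : ∀ i, MemLp (f i) 2 volume)
    (hfI : ∀ i, eLpNorm (f i) ⊤ volume < 1 / 2) :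
    (Matrix.of fun i j : Fin N =>
      -∫ x, Complex.log (1 - (starRingEnd ℂ) (f i x) * f j x)).PosSemidef := by
  -- a.e. pointwise bound
  have hb : ∀ᵐ x : (Fin d → ℝ) ∂volume, ∀ i, ‖f i x‖ < 2⁻¹ := by
    rw [MeasureTheory.ae_all_iff]
    intro i
    filter_upwards [MeasureTheory.ae_le_eLpNormEssSup (f := f i) (μ := volume)] with x hx
    have h2 : (‖f i x‖₊ : ℝ≥0∞) < 1 / 2 :=
      lt_of_le_of_lt hx (by simpa [eLpNorm_exponent_top] using hfI i)
    have h3 : ((1 : ℝ≥0∞) / 2) = ((2⁻¹ : ℝ≥0) : ℝ≥0∞) := by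
      rw [ENNReal.coe_inv (by norm_num), one_div]
      norm_num
    rw [h3, ENNReal.coe_lt_coe] at h2
    have := NNReal.coe_lt_coe.mpr h2
    simpa using this
  -- measurability
  have hmeas : ∀ i j, AEStronglyMeasurable
      (fun x : (Fin d → ℝ) => Complex.log (1 - (starRingEnd ℂ) (f i x) * f j x)) volume := by
    intro i j
    have h1 : AEMeasurable (fun x : (Fin d → ℝ) => 1 - (starRingEnd ℂ) (f i x) * f j x) volume := by
      apply AEMeasurable.sub aemeasurable_const
      have hconj : AEMeasurable (fun x : (Fin d → ℝ) => (starRingEnd ℂ) (f i x)) volume := by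
        simp_rw [starRingEnd_apply]
        exact continuous_star.measurable.comp_aemeasurable
          (hf2 i).aestronglyMeasurable.aemeasurable
      exact hconj.mul (hf2 j).aestronglyMeasurable.aemeasurable
    exact (Complex.measurable_log.comp_aemeasurable h1).aestronglyMeasurable
  -- integrability
  have hint : ∀ i j, Integrable
      (fun x : (Fin d → ℝ) => Complex.log (1 - (starRingEnd ℂ) (f i x) * f j x)) volume := by
    intro i j
    have hdom : Integrable (fun x : (Fin d → ℝ) => (3/4 : ℝ) * (‖f i x‖^2 + ‖f j x‖^2)) volume :=
      (((hf2 i).norm.integrable_sq).add ((hf2 j).norm.integrable_sq)).const_mul _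
    refine hdom.mono' (hmeas i j) ?_
    filter_upwards [hb] with x hx
    have h1 : ‖(starRingEnd ℂ) (f i x) * f j x‖ ≤ 1/2 :=
      le_of_lt (lt_trans (norm_w_lt (hx i) (hx j)) (by norm_num))
    calc ‖Complex.log (1 - (starRingEnd ℂ) (f i x) * f j x)‖
        ≤ 3/2 * ‖-((starRingEnd ℂ) (f i x) * f j x)‖ := by
          have := Complex.norm_log_one_add_half_le_self
            (z := -((starRingEnd ℂ) (f i x) * f j x)) (by simpa using h1)
          simpa [sub_eq_add_neg] using this
      _ ≤ 3/4 * (‖f i x‖^2 + ‖f j x‖^2) := by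
          rw [norm_neg, norm_mul, RCLike.norm_conj]
          nlinarith [sq_nonneg (‖f i x‖ - ‖f j x‖), norm_nonneg (f i x), norm_nonneg (f j x)]
  rw [Matrix.posSemidef_iff_dotProduct_mulVec]
  constructor
  · -- Hermitian
    ext i j
    simp only [Matrix.conjTranspose_apply, Matrix.of_apply, star_neg, Complex.star_def, neg_inj]
    rw [← integral_conj]
    apply integral_congr_ae
    filter_upwards [hb] with x hx
    rw [← Complex.log_conj _ (arg_ne_pi_aux (hx j) (hx i))]
    congr 1
    simp only [map_sub, map_one, map_mul, Complex.conj_conj]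
    ring
  · -- quadratic form
    intro x
    have hint2 : ∀ i j, Integrable
        (fun t : (Fin d → ℝ) => (starRingEnd ℂ) (x i) * x j *
          -(Complex.log (1 - (starRingEnd ℂ) (f i t) * f j t))) volume :=
      fun i j => ((hint i j).neg.const_mul _)
    have key : ∫ t, ∑ i, ∑ j, (starRingEnd ℂ) (x i) * x j *
          -(Complex.log (1 - (starRingEnd ℂ) (f i t) * f j t)) ∂volume
        = ∑ i, ∑ j, (starRingEnd ℂ) (x i) * x j *
          -(∫ t, Complex.log (1 - (starRingEnd ℂ) (f i t) * f j t) ∂volume) := by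
      rw [integral_finset_sum _ (fun i _ => integrable_finset_sum _ (fun j _ => hint2 i j))]
      refine Finset.sum_congr rfl fun i _ => ?_
      rw [integral_finset_sum _ (fun j _ => hint2 i j)]
      refine Finset.sum_congr rfl fun j _ => ?_
      rw [integral_const_mul, integral_neg]
    have heq : dotProduct (star x) ((Matrix.of fun i j : Fin N =>
        -∫ t, Complex.log (1 - (starRingEnd ℂ) (f i t) * f j t)).mulVec x)
        = ∫ t, ∑ i, ∑ j, (starRingEnd ℂ) (x i) * x j *
          -(Complex.log (1 - (starRingEnd ℂ) (f i t) * f j t)) ∂volume := by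
      rw [key]
      simp only [dotProduct, Matrix.mulVec, Matrix.of_apply, Pi.star_apply,
        Complex.star_def, Finset.mul_sum]
      refine Finset.sum_congr rfl fun i _ => Finset.sum_congr rfl fun j _ => ?_
      ring
    rw [heq]
    apply integral_nonneg_cplx (integrable_finset_sum _
      (fun i _ => integrable_finset_sum _ (fun j _ => hint2 i j)))
    filter_upwards [hb] with t ht
    exact key_pointwise (fun i => f i t) x (fun i => ht i)
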